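/- Let R be a commutative ring and M an R-module. The map sending an R-submodule L of M to the subtractive closure ⟨u_M(L)⟩_k in fgMod(M) of the fgId(R)-subsemimodule generated by {R·m : m ∈ L}, and the map sending a subtractive fgId(R)-subsemimodule Λ of fgMod(M) to u_M⁻¹(Λ) = {m ∈ M : R·m ∈ Λ}, are mutually inverse, inclusion-preserving bijections between the set Mod(M) of R-submodules of M and the set Mod_k(fgMod(M)) of subtractive fgId(R)-subsemimodules of fgMod(M). -/

import Mathlib

def FGIdeal (R : Type*) [CommRing R] : Type _ := {I : Ideal R // I.FG}

namespace FGIdeal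

variable {R : Type*} [CommRing R]

instance : Zero (FGIdeal R) := ⟨⟨⊥, Submodule.fg_bot⟩⟩

instance : One (FGIdeal R) := ⟨⟨1, ⟨{1}, by simp [Ideal.one_eq_top]⟩⟩⟩

instance : Add (FGIdeal R) :=
  ⟨fun I J => ⟨I.1 + J.1, by rw [Submodule.add_eq_sup]; exact Submodule.FG.sup I.2 J.2⟩⟩

instance : Mul (FGIdeal R) := ⟨fun I J => ⟨I.1 * J.1, Submodule.FG.mul I.2 J.2⟩⟩

instance : SMul ℕ (FGIdeal R) :=
  ⟨fun n I => ⟨n • I.1, by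
    induction n with
    | zero => simpa using! Submodule.fg_bot
    | succ n ih => rw [succ_nsmul, Submodule.add_eq_sup]; exact Submodule.FG.sup ih I.2⟩⟩

instance : Pow (FGIdeal R) ℕ := ⟨fun I n => ⟨I.1 ^ n, Submodule.FG.pow I.2 n⟩⟩

instance : NatCast (FGIdeal R) :=
  ⟨fun n => ⟨(n : Ideal R), by
    induction n with
    | zero => simpa using! Submodule.fg_bot
    | succ n ih =>
        rw [Nat.cast_succ, Submodule.add_eq_sup]
        exact Submodule.FG.sup ih ⟨{1}, by simp [Ideal.one_eq_top]⟩⟩⟩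

instance : CommSemiring (FGIdeal R) :=
  Subtype.val_injective.commSemiring (fun I : FGIdeal R => I.1) rfl rfl
    (fun _ _ => rfl) (fun _ _ => rfl) (fun _ _ => rfl) (fun _ _ => rfl) (fun _ => rfl)

end FGIdeal

/-- The universal integral seminorm `u_R : R → fgId(R)`, `a ↦ R·a`. -/
def uRfg {R : Type*} [CommRing R] (a : R) : FGIdeal R := ⟨Ideal.span {a}, Submodule.fg_span_singleton a⟩

/-- The type of finitely generated `R`-submodules of `M`. -/
def FGSubmodule (R M : Type*) [CommRing R] [AddCommGroup M] [Module R M] : Type _ :=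
  {N : Submodule R M // N.FG}

namespace FGSubmodule

variable {R M : Type*} [CommRing R] [AddCommGroup M] [Module R M]

instance : Zero (FGSubmodule R M) := ⟨⟨⊥, Submodule.fg_bot⟩⟩

instance : Add (FGSubmodule R M) := ⟨fun A B => ⟨A.1 ⊔ B.1, Submodule.FG.sup A.2 B.2⟩⟩

instance : AddCommMonoid (FGSubmodule R M) where
  add_assoc A B C := Subtype.ext (sup_assoc _ _ _)
  zero_add A := Subtype.ext (bot_sup_eq _)
  add_zero A := Subtype.ext (sup_bot_eq _)
  add_comm A B := Subtype.ext (sup_comm _ _)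
  nsmul := nsmulRec

/-- The action of `fgId(R)` on `fgMod(M)`, `(I, N) ↦ I • N`. -/
instance : SMul (FGIdeal R) (FGSubmodule R M) :=
  ⟨fun ρ ν => ⟨ρ.1 • ν.1, by
    rw [Submodule.smul_eq_map₂]; exact Submodule.FG.map₂ _ ρ.2 ν.2⟩⟩

end FGSubmodule

/-- The universal `u_R`-norm `u_M : M → fgMod(M)`, `m ↦ R·m`. -/
def uMfg {R M : Type*} [CommRing R] [AddCommGroup M] [Module R M] (m : M) : FGSubmodule R M :=
  ⟨Submodule.span R {m}, Submodule.fg_span_singleton m⟩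

section SubSemimodules

variable {R M : Type*} [CommRing R] [AddCommGroup M] [Module R M]

/-- A subset of `fgMod(M)` which is an `fgId(R)`-subsemimodule: it contains `0` and is
closed under addition and under the action of `fgId(R)`. -/
def IsSubSemimoduleSet (Λ : Set (FGSubmodule R M)) : Prop :=
  (0 : FGSubmodule R M) ∈ Λ ∧
    (∀ a ∈ Λ, ∀ b ∈ Λ, a + b ∈ Λ) ∧
    ∀ (ρ : FGIdeal R), ∀ a ∈ Λ, ρ • a ∈ Λ

/-- A subset `Λ` of an additive structure is subtractive if `a + b ∈ Λ` and `a ∈ Λ`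
imply `b ∈ Λ`. -/
def IsSubtractiveSet {α : Type*} [Add α] (Λ : Set α) : Prop :=
  ∀ a b : α, a + b ∈ Λ → a ∈ Λ → b ∈ Λ

/-- The smallest subtractive `fgId(R)`-subsemimodule of `fgMod(M)` containing a given
subset (the subtractive closure of the subsemimodule it generates). -/
def kClosureSM (X : Set (FGSubmodule R M)) : Set (FGSubmodule R M) :=
  ⋂₀ {Λ : Set (FGSubmodule R M) | (IsSubSemimoduleSet Λ ∧ IsSubtractiveSet Λ) ∧ X ⊆ Λ}

/-- The map `Mod(M) → Mod_k(fgMod(M))`, `L ↦ ⟨u_M(L)⟩_k`. -/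
def uMtilde (L : Submodule R M) : Set (FGSubmodule R M) :=
  kClosureSM (uMfg '' (L : Set M))

end SubSemimodules

section Aux

variable {R M : Type*} [CommRing R] [AddCommGroup M] [Module R M]

lemma FGSubmodule.val_add (a b : FGSubmodule R M) : (a + b).1 = a.1 ⊔ b.1 := rfl

lemma aux_mem_of_le {Λ : Set (FGSubmodule R M)} (h1 : IsSubSemimoduleSet Λ)
    (h2 : IsSubtractiveSet Λ) {a b : FGSubmodule R M} (hab : b.1 ≤ a.1) (ha : a ∈ Λ) :
    b ∈ Λ := by
  refine h2 a b ?_ ha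
  have : a + b = a := Subtype.ext (by rw [FGSubmodule.val_add]; exact sup_eq_left.mpr hab)
  rwa [this]

lemma aux_span_mem {L : Submodule R M} {Λ : Set (FGSubmodule R M)}
    (h1 : IsSubSemimoduleSet Λ) (hsub : uMfg '' (L : Set M) ⊆ Λ) (S : Finset M)
    (hS : (↑S : Set M) ⊆ L) (ν : FGSubmodule R M)
    (hν : ν.1 = Submodule.span R (↑S : Set M)) : ν ∈ Λ := by
  classical
  induction S using Finset.induction generalizing ν with
  | empty =>
    have : ν = 0 := Subtype.ext (by rw [hν]; simp; rfl)
    rw [this]; exact h1.1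
  | @insert m S hm ih =>
    have hmL : m ∈ L := hS (Finset.mem_insert_self m S)
    have hSL : (↑S : Set M) ⊆ L := fun x hx => hS (Finset.mem_insert_of_mem hx)
    have hS' : (⟨Submodule.span R (↑S : Set M), Submodule.fg_span (Set.Finite.ofFinset S fun _ => Iff.rfl)⟩ :
        FGSubmodule R M) ∈ Λ := ih hSL _ rfl
    have hu : uMfg m ∈ Λ := hsub ⟨m, hmL, rfl⟩
    have := h1.2.1 _ hu _ hS'
    have heq : ν = uMfg m + ⟨Submodule.span R (↑S : Set M),
        Submodule.fg_span (Set.Finite.ofFinset S fun _ => Iff.rfl)⟩ := by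
      apply Subtype.ext
      rw [hν]; show _ = Submodule.span R {m} ⊔ Submodule.span R (↑S : Set M)
      rw [Finset.coe_insert, Set.insert_eq, Submodule.span_union]
    rw [heq]; exact this

lemma aux_eq {Λ : Set (FGSubmodule R M)} (h1 : IsSubSemimoduleSet Λ) (h2 : IsSubtractiveSet Λ)
    (L : Submodule R M) (hL : ∀ m : M, m ∈ L ↔ uMfg m ∈ Λ) :
    {ν : FGSubmodule R M | ν.1 ≤ L} = Λ := by
  ext ν
  simp only [Set.mem_setOf_eq]
  constructor
  · intro hν
    obtain ⟨S, hS⟩ := ν.2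
    refine aux_span_mem (L := L) h1 ?_ S ?_ ν hS.symm
    · rintro _ ⟨m, hm, rfl⟩
      exact (hL m).mp hm
    · intro x hx
      exact hν (hS ▸ Submodule.subset_span hx)
  · intro hν m hm
    refine (hL m).mpr (aux_mem_of_le h1 h2 ?_ hν)
    exact (Submodule.span_singleton_le_iff_mem m ν.1).mpr hm

lemma setle_props (L : Submodule R M) :
    IsSubSemimoduleSet {ν : FGSubmodule R M | ν.1 ≤ L} ∧
      IsSubtractiveSet {ν : FGSubmodule R M | ν.1 ≤ L} := by
  refine ⟨⟨?_, ?_, ?_⟩, ?_⟩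
  · simp only [Set.mem_setOf_eq]
    exact bot_le
  · intro a ha b hb
    simp only [Set.mem_setOf_eq] at *
    exact sup_le ha hb
  · intro ρ a ha
    simp only [Set.mem_setOf_eq] at *
    exact le_trans Submodule.smul_le_right ha
  · intro a b hab _
    simp only [Set.mem_setOf_eq] at *
    exact le_trans (le_sup_right : b.1 ≤ a.1 ⊔ b.1) hab

lemma uMtilde_eq (L : Submodule R M) :
    uMtilde L = {ν : FGSubmodule R M | ν.1 ≤ L} := by
  apply le_antisymm
  · apply Set.sInter_subset_of_mem
    refine ⟨⟨(setle_props L).1, (setle_props L).2⟩, ?_⟩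
    · rintro _ ⟨m, hm, rfl⟩
      exact (Submodule.span_singleton_le_iff_mem m L).mpr hm
  · intro ν hν
    intro Λ hΛ
    obtain ⟨S, hS⟩ := ν.2
    refine aux_span_mem hΛ.1.1 hΛ.2 S (fun x hx => hν ?_) ν hS.symm
    rw [← hS]
    exact Submodule.subset_span hx

end Aux

/-- `L ↦ ⟨u_M(L)⟩_k` and `Λ ↦ u_M⁻¹(Λ)` are mutually inverse,
inclusion-preserving bijections between the `R`-submodules of `M` and the subtractive
`fgId(R)`-subsemimodules of `fgMod(M)`. -/
theorem correspondence_submodules_subtractive_subsemimodules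
    (R M : Type*) [CommRing R] [AddCommGroup M] [Module R M] :
    (∀ L : Submodule R M, IsSubSemimoduleSet (uMtilde L) ∧ IsSubtractiveSet (uMtilde L)) ∧
    (∀ L : Submodule R M, uMfg ⁻¹' (uMtilde L) = (L : Set M)) ∧
    (∀ Λ : Set (FGSubmodule R M), IsSubSemimoduleSet Λ → IsSubtractiveSet Λ →
      ∃ L : Submodule R M, (L : Set M) = uMfg ⁻¹' Λ ∧ uMtilde L = Λ) ∧
    (∀ L L' : Submodule R M, L ≤ L' → uMtilde L ⊆ uMtilde L') ∧
    (∀ Λ Λ' : Set (FGSubmodule R M), Λ ⊆ Λ' →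
      (uMfg ⁻¹' Λ : Set M) ⊆ uMfg ⁻¹' Λ') := by
  refine ⟨?_, ?_, ?_, ?_, ?_⟩
  · intro L
    rw [uMtilde_eq]
    exact setle_props L
  · intro L
    ext m
    rw [Set.mem_preimage, uMtilde_eq]
    exact Submodule.span_singleton_le_iff_mem m L
  · intro Λ h1 h2
    have hdown : ∀ {a b : FGSubmodule R M}, b.1 ≤ a.1 → a ∈ Λ → b ∈ Λ :=
      fun h ha => aux_mem_of_le h1 h2 h ha
    refine ⟨{ carrier := uMfg ⁻¹' Λ
              add_mem' := ?_
              zero_mem' := ?_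
              smul_mem' := ?_ }, rfl, ?_⟩
    · intro a b ha hb
      have hab : uMfg a + uMfg b ∈ Λ := h1.2.1 _ ha _ hb
      refine hdown ?_ hab
      rw [FGSubmodule.val_add]
      refine Submodule.span_le.mpr ?_
      rintro _ rfl
      exact Submodule.add_mem _ (le_sup_left (α := Submodule R M)
        (Submodule.mem_span_singleton_self a))
        (le_sup_right (α := Submodule R M) (Submodule.mem_span_singleton_self b))
    · have : (uMfg (0 : M)) = (0 : FGSubmodule R M) := Subtype.ext (by
        show Submodule.span R {(0:M)} = ⊥; simp)
      show uMfg (0 : M) ∈ Λ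
      rw [this]; exact h1.1
    · intro r m hm
      refine hdown ?_ hm
      refine Submodule.span_le.mpr ?_
      rintro _ rfl
      exact Submodule.smul_mem _ r (Submodule.mem_span_singleton_self m)
    · rw [uMtilde_eq]
      exact aux_eq h1 h2 _ (fun m => Iff.rfl)
  · intro L L' hLL
    rw [uMtilde_eq, uMtilde_eq]
    exact fun ν hν => le_trans hν hLL
  · intro Λ Λ' h m hm
    exact h hm
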